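/- Let Z₁,…,Zₙ be independent standard Gaussian random variables, λ₁,…,λₙ and δ₁,…,δₙ real constants, γ² := Σᵢ λᵢ²(2 + 4δᵢ²), and λ_max := max(λ₁,…,λₙ,0). Then for every η ≥ 0, P( Σᵢ λᵢ((Zᵢ+δᵢ)² − (1+δᵢ²)) ≥ ηγ ) ≤ exp( −η²/(2 + 4η λ_max/γ) ). -/

import Mathlib

open MeasureTheory ProbabilityTheory Finset
open Real
open scoped ENNReal NNReal

lemma rexp_quad_eq (b c d : ℝ) (x : ℝ) :
    Complex.exp ((b : ℂ) * (x:ℂ) ^ 2 + (c:ℂ) * (x:ℂ) + (d:ℂ))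
      = ((rexp (b * x ^ 2 + c * x + d) : ℝ) : ℂ) := by
  rw [Complex.ofReal_exp]; push_cast; ring_nf

lemma integrable_rexp_quadratic {b : ℝ} (hb : b < 0) (c d : ℝ) :
    Integrable (fun x : ℝ => rexp (b * x ^ 2 + c * x + d)) := by
  have h := integrable_cexp_quadratic' (b := (b : ℂ)) (by simpa using hb) (c : ℂ) (d : ℂ)
  have h2 := h.re
  refine h2.congr (Filter.Eventually.of_forall fun x => ?_)
  show RCLike.re (Complex.exp ((b : ℂ) * (x:ℂ) ^ 2 + (c:ℂ) * (x:ℂ) + (d:ℂ))) = _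
  rw [rexp_quad_eq]
  exact Complex.ofReal_re _

lemma integral_rexp_quadratic {b : ℝ} (hb : b < 0) (c d : ℝ) :
    ∫ x : ℝ, rexp (b * x ^ 2 + c * x + d)
      = Real.sqrt (π / (-b)) * rexp (d - c ^ 2 / (4 * b)) := by
  have h := integral_cexp_quadratic (b := (b : ℂ)) (by simpa using hb) (c : ℂ) (d : ℂ)
  have h1 : ∫ x : ℝ, Complex.exp ((b : ℂ) * (x:ℂ) ^ 2 + (c:ℂ) * (x:ℂ) + (d:ℂ))
      = ((∫ x : ℝ, rexp (b * x ^ 2 + c * x + d) : ℝ) : ℂ) := by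
    simp_rw [rexp_quad_eq]
    exact integral_ofReal
  have h2 : ((π : ℂ) / -(b:ℂ)) ^ ((1:ℂ) / 2) = ((Real.sqrt (π / (-b)) : ℝ) : ℂ) := by
    rw [Real.sqrt_eq_rpow, Complex.ofReal_cpow (div_nonneg Real.pi_pos.le (by linarith)),
      Complex.ofReal_div]
    push_cast
    ring_nf
  have h3 : Complex.exp ((d:ℂ) - (c:ℂ)^2 / (4 * (b:ℂ)))
      = ((rexp (d - c ^ 2 / (4 * b)) : ℝ) : ℂ) := by
    rw [Complex.ofReal_exp]
    push_cast
    ring_nf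
  rw [h1, h2, h3, ← Complex.ofReal_mul] at h
  exact_mod_cast h

lemma gaussianReal_eq_withDensity :
    gaussianReal 0 1 = (volume : Measure ℝ).withDensity
      (fun x => ((gaussianPDFReal 0 1 x).toNNReal : ℝ≥0∞)) := by
  rw [gaussianReal_of_var_ne_zero 0 one_ne_zero]
  rfl

lemma gauss_integrand (s δ : ℝ) (x : ℝ) :
    gaussianPDFReal 0 1 x * rexp (s * (x + δ) ^ 2)
      = (Real.sqrt (2 * π))⁻¹ * rexp ((s - 1/2) * x ^ 2 + (2*s*δ) * x + s * δ ^ 2) := by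
  rw [gaussianPDFReal]
  push_cast
  rw [mul_one, mul_one, sub_zero, mul_assoc, ← Real.exp_add]
  ring_nf

lemma integrable_gauss_exp_sq {s : ℝ} (hs : s < 1/2) (δ : ℝ) :
    Integrable (fun x => rexp (s * (x + δ) ^ 2)) (gaussianReal 0 1) := by
  rw [gaussianReal_eq_withDensity,
    integrable_withDensity_iff_integrable_smul
      ((measurable_gaussianPDFReal 0 1).real_toNNReal)]
  have : ∀ x : ℝ, (gaussianPDFReal 0 1 x).toNNReal • rexp (s * (x + δ) ^ 2)
      = (Real.sqrt (2 * π))⁻¹ * rexp ((s - 1/2) * x ^ 2 + (2*s*δ) * x + s * δ ^ 2) := by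
    intro x
    rw [NNReal.smul_def, smul_eq_mul, Real.coe_toNNReal _ (gaussianPDFReal_nonneg 0 1 x),
      gauss_integrand]
  simp_rw [this]
  exact (integrable_rexp_quadratic (by linarith) _ _).const_mul _

lemma integral_gauss_exp_sq {s : ℝ} (hs : s < 1/2) (δ : ℝ) :
    ∫ x, rexp (s * (x + δ) ^ 2) ∂(gaussianReal 0 1)
      = Real.sqrt (1 - 2*s)⁻¹ * rexp (s * δ ^ 2 / (1 - 2*s)) := by
  have h12 : (0:ℝ) < 1 - 2*s := by linarith
  rw [gaussianReal_eq_withDensity,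
    integral_withDensity_eq_integral_smul ((measurable_gaussianPDFReal 0 1).real_toNNReal)]
  have : ∀ x : ℝ, (gaussianPDFReal 0 1 x).toNNReal • rexp (s * (x + δ) ^ 2)
      = (Real.sqrt (2 * π))⁻¹ * rexp ((s - 1/2) * x ^ 2 + (2*s*δ) * x + s * δ ^ 2) := by
    intro x
    rw [NNReal.smul_def, smul_eq_mul, Real.coe_toNNReal _ (gaussianPDFReal_nonneg 0 1 x),
      gauss_integrand]
  simp_rw [this]
  rw [integral_const_mul, integral_rexp_quadratic (by linarith)]
  have hπ : (0:ℝ) < π := Real.pi_pos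
  have h1 : (Real.sqrt (2 * π))⁻¹ * Real.sqrt (π / -(s - 1/2)) = Real.sqrt (1 - 2*s)⁻¹ := by
    rw [← Real.sqrt_inv, ← Real.sqrt_mul (by positivity)]
    congr 1
    have hp2 : (0:ℝ) < -(s - 1/2) := by linarith
    rw [inv_mul_eq_div, div_div, inv_eq_one_div,
      div_eq_div_iff (ne_of_gt (mul_pos hp2 (by positivity))) (ne_of_gt h12)]
    ring
  have h2 : s * δ ^ 2 - (2*s*δ) ^ 2 / (4 * (s - 1/2)) = s * δ ^ 2 / (1 - 2*s) := by
    have hd : (1:ℝ) - 2*s ≠ 0 := ne_of_gt h12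
    have h4 : (4:ℝ) * (s - 1/2) ≠ 0 := by intro h; nlinarith
    rw [eq_div_iff hd, sub_mul, div_mul_eq_mul_div, sub_eq_iff_eq_add, eq_comm, add_comm,
      ← eq_sub_iff_add_eq, div_eq_iff h4]
    ring
  rw [← mul_assoc, h1, h2]

-- Lemma A : u ≤ 0 → -log(1-u) - u ≤ u^2/2
lemma logA {u : ℝ} (hu : u ≤ 0) : -Real.log (1 - u) - u ≤ u ^ 2 / 2 := by
  set f : ℝ → ℝ := fun x => x ^ 2 / 2 + Real.log (1 - x) + x with hf
  have key : ∀ x ∈ Set.Icc u 0, AntitoneOn f (Set.Icc u 0) → True := fun _ _ _ => trivial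
  have hderiv : ∀ x ∈ Set.Ioo u 0, HasDerivAt f (x - (1 - x)⁻¹ + 1) x := by
    intro x hx
    have hx1 : 1 - x ≠ 0 := by have := hx.2; intro h; nlinarith
    have h1 : HasDerivAt (fun x : ℝ => x ^ 2 / 2) x x := by
      simpa using ((hasDerivAt_pow 2 x).div_const 2)
    have h2 : HasDerivAt (fun x : ℝ => Real.log (1 - x)) (-(1 - x)⁻¹) x := by
      have := (Real.hasDerivAt_log hx1).comp x ((hasDerivAt_id x).const_sub 1)
      simpa [Function.comp_def] using this
    have := (h1.add h2).add (hasDerivAt_id x)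
    convert this using 1 <;> (try simp [hf, sub_eq_add_neg]) <;> rfl
  have hanti : AntitoneOn f (Set.Icc u 0) := by
    rcases eq_or_lt_of_le hu with h | h
    · intro a ha b hb hab
      have : a = b := le_antisymm hab (by
        rcases ha with ⟨ha1, ha2⟩; rcases hb with ⟨hb1, hb2⟩
        subst h; linarith)
      simp [this]
    · apply antitoneOn_of_deriv_nonpos (convex_Icc u 0)
      · apply ContinuousOn.add
        apply ContinuousOn.add
        · exact (continuous_pow 2).continuousOn.div_const 2
        · apply ContinuousOn.log
          · exact (continuous_const.sub continuous_id).continuousOn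
          · intro x hx
            have := hx.2
            intro hc; rw [Set.mem_Icc] at hx; nlinarith [hx.2]
        · exact continuous_id.continuousOn
      · intro x hx
        rw [interior_Icc] at hx
        exact ((hderiv x hx).differentiableAt).differentiableWithinAt
      · intro x hx
        rw [interior_Icc] at hx
        rw [(hderiv x hx).deriv]
        have hx0 : x < 0 := hx.2
        have h1x : 0 < 1 - x := by linarith
        have : x - (1 - x)⁻¹ + 1 = -(x ^ 2) / (1 - x) := by
          field_simp
          ring
        rw [this]
        apply div_nonpos_of_nonpos_of_nonneg _ h1x.le
        nlinarith
  have h0 : f 0 ≤ f u := hanti (Set.left_mem_Icc.2 hu) (Set.right_mem_Icc.2 hu) hu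
  have : f 0 = 0 := by simp [hf]
  rw [this] at h0
  simp only [hf] at h0
  linarith

-- Lemma B : 0 ≤ u < 1 → -log(1-u) - u ≤ u^2/(2*(1-u))
lemma logB {u : ℝ} (hu0 : 0 ≤ u) (hu1 : u < 1) :
    -Real.log (1 - u) - u ≤ u ^ 2 / (2 * (1 - u)) := by
  set f : ℝ → ℝ := fun x => x ^ 2 / (2 * (1 - x)) + Real.log (1 - x) + x with hf
  have hderiv : ∀ x ∈ Set.Ioo (0:ℝ) u, HasDerivAt f
      ((2 * x * (2 * (1 - x)) - x ^ 2 * (-2)) / (2 * (1 - x)) ^ 2 - (1 - x)⁻¹ + 1) x := by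
    intro x hx
    have hx1 : (1:ℝ) - x ≠ 0 := by have := hx.2; intro h; nlinarith
    have hx2 : (2:ℝ) * (1 - x) ≠ 0 := by intro h; apply hx1; linarith
    have h1 : HasDerivAt (fun x : ℝ => x ^ 2 / (2 * (1 - x)))
        ((2 * x * (2 * (1 - x)) - x ^ 2 * (-2)) / (2 * (1 - x)) ^ 2) x := by
      have ha : HasDerivAt (fun x : ℝ => x ^ 2) (2 * x) x := by
        simpa using hasDerivAt_pow 2 x
      have hb : HasDerivAt (fun x : ℝ => 2 * (1 - x)) (-2) x := by
        have := ((hasDerivAt_id x).const_sub 1).const_mul (2:ℝ)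
        simpa using this
      exact ha.div hb hx2
    have h2 : HasDerivAt (fun x : ℝ => Real.log (1 - x)) (-(1 - x)⁻¹) x := by
      have := (Real.hasDerivAt_log hx1).comp x ((hasDerivAt_id x).const_sub 1)
      simpa [Function.comp_def] using this
    have := (h1.add h2).add (hasDerivAt_id x)
    convert this using 1 <;> (try simp [hf, sub_eq_add_neg]) <;> rfl
  have hmono : MonotoneOn f (Set.Icc 0 u) := by
    rcases eq_or_lt_of_le hu0 with h | h
    · intro a ha b hb hab
      have : a = b := le_antisymm hab (by
        rcases ha with ⟨ha1, ha2⟩; rcases hb with ⟨hb1, hb2⟩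
        rw [← h] at ha2 hb2; linarith)
      simp [this]
    · apply monotoneOn_of_deriv_nonneg (convex_Icc 0 u)
      · apply ContinuousOn.add
        apply ContinuousOn.add
        · apply ContinuousOn.div
          · exact (continuous_pow 2).continuousOn
          · exact (continuous_const.mul (continuous_const.sub continuous_id)).continuousOn
          · intro x hx
            rw [Set.mem_Icc] at hx
            have : x < 1 := lt_of_le_of_lt hx.2 hu1
            intro hc; nlinarith
        · apply ContinuousOn.log
          · exact (continuous_const.sub continuous_id).continuousOn
          · intro x hx
            rw [Set.mem_Icc] at hx
            have : x < 1 := lt_of_le_of_lt hx.2 hu1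
            intro hc; nlinarith
        · exact continuous_id.continuousOn
      · intro x hx
        rw [interior_Icc] at hx
        exact ((hderiv x hx).differentiableAt).differentiableWithinAt
      · intro x hx
        rw [interior_Icc] at hx
        rw [(hderiv x hx).deriv]
        have hx0 : 0 < x := hx.1
        have hxu : x < u := hx.2
        have h1x : 0 < 1 - x := by linarith
        have key : (2 * x * (2 * (1 - x)) - x ^ 2 * (-2)) / (2 * (1 - x)) ^ 2 - (1 - x)⁻¹ + 1
            = x ^ 2 / (2 * (1 - x) ^ 2) := by
          field_simp
          ring
        rw [key]
        positivity
  have h0 : f 0 ≤ f u := hmono (Set.left_mem_Icc.2 hu0) (Set.right_mem_Icc.2 hu0) hu0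
  have hz : f 0 = 0 := by simp [hf]
  rw [hz] at h0
  simp only [hf] at h0
  linarith

lemma scalar_bound {s δ c : ℝ} (hc0 : 0 ≤ c) (hc1 : c < 1) (hsc : 2 * s ≤ c) :
    -(s * (1 + δ ^ 2)) - Real.log (1 - 2 * s) / 2 + s * δ ^ 2 / (1 - 2 * s)
      ≤ s ^ 2 * (2 + 4 * δ ^ 2) / (2 * (1 - c)) := by
  have hA : (0:ℝ) < 1 - 2 * s := by linarith
  have hB : (0:ℝ) < 1 - c := by linarith
  have hBA : 1 - c ≤ 1 - 2 * s := by linarith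
  have hδ : (0:ℝ) ≤ δ ^ 2 := sq_nonneg δ
  have hid : s * δ ^ 2 / (1 - 2 * s) - s * δ ^ 2 = 2 * s ^ 2 * δ ^ 2 / (1 - 2 * s) := by
    rw [eq_div_iff hA.ne', sub_mul, div_mul_cancel₀ _ hA.ne']
    ring
  have hRHS : s ^ 2 * (2 + 4 * δ ^ 2) / (2 * (1 - c))
      = s ^ 2 / (1 - c) + 2 * s ^ 2 * δ ^ 2 / (1 - c) := by
    field_simp
    ring
  rcases le_or_gt 0 s with hs | hs
  · have hL := logB (u := 2 * s) (by linarith) (by linarith)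
    -- -log(1-2s) - 2s ≤ (2s)^2/(2*(1-2s))
    have h1 : (2 * s) ^ 2 / (2 * (1 - 2 * s)) = 2 * (s ^ 2 / (1 - 2 * s)) := by
      field_simp
    have h2 : s ^ 2 / (1 - 2 * s) ≤ s ^ 2 / (1 - c) :=
      div_le_div_of_nonneg_left (sq_nonneg s) hB hBA
    have h3 : 2 * s ^ 2 * δ ^ 2 / (1 - 2 * s) ≤ 2 * s ^ 2 * δ ^ 2 / (1 - c) :=
      div_le_div_of_nonneg_left (by positivity) hB hBA
    rw [h1] at hL
    rw [hRHS]
    linarith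
  · have hL := logA (u := 2 * s) (by linarith)
    have h1 : (2 * s) ^ 2 / 2 = 2 * s ^ 2 := by ring
    have h2 : s ^ 2 ≤ s ^ 2 / (1 - c) := by
      rw [le_div_iff₀ hB]
      nlinarith [sq_nonneg s]
    have h3 : 2 * s ^ 2 * δ ^ 2 / (1 - 2 * s) ≤ 2 * s ^ 2 * δ ^ 2 / (1 - c) :=
      div_le_div_of_nonneg_left (by positivity) hB hBA
    rw [h1] at hL
    rw [hRHS]
    linarith
lemma factor_bound {s δ c : ℝ} (hc0 : 0 ≤ c) (hc1 : c < 1) (hsc : 2 * s ≤ c) :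
    rexp (-(s * (1 + δ ^ 2))) * (Real.sqrt (1 - 2 * s)⁻¹ * rexp (s * δ ^ 2 / (1 - 2 * s)))
      ≤ rexp (s ^ 2 * (2 + 4 * δ ^ 2) / (2 * (1 - c))) := by
  have hA : (0:ℝ) < 1 - 2 * s := by linarith
  have hsqrt : Real.sqrt (1 - 2 * s)⁻¹ = rexp (-(Real.log (1 - 2 * s)) / 2) := by
    rw [← Real.exp_log (Real.sqrt_pos.mpr (inv_pos.mpr hA)),
      Real.log_sqrt (inv_nonneg.mpr hA.le), Real.log_inv]
  rw [hsqrt, ← Real.exp_add, ← Real.exp_add]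
  apply Real.exp_le_exp.2
  have := scalar_bound hc0 hc1 hsc (δ := δ)
  linarith

lemma my_integrable_pi {n : ℕ} (μ : Measure ℝ) [SigmaFinite μ] (f : Fin n → ℝ → ℝ)
    (hf : ∀ i, Integrable (f i) μ) :
    Integrable (fun x : Fin n → ℝ => ∏ i, f i (x i)) (Measure.pi fun _ => μ) := by
  letI : MeasureSpace ℝ := ⟨μ⟩
  haveI : SigmaFinite (volume : Measure ℝ) := ‹_›
  have : Measure.pi (fun _ : Fin n => μ) = (volume : Measure (Fin n → ℝ)) := rfl
  rw [this]
  exact Integrable.fintype_prod (f := f) hf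

lemma my_integral_pi {n : ℕ} (μ : Measure ℝ) [SigmaFinite μ] (f : Fin n → ℝ → ℝ) :
    ∫ x : Fin n → ℝ, ∏ i, f i (x i) ∂(Measure.pi fun _ => μ) = ∏ i, ∫ x, f i x ∂μ := by
  letI : MeasureSpace ℝ := ⟨μ⟩
  haveI : SigmaFinite (volume : Measure ℝ) := ‹_›
  have : Measure.pi (fun _ : Fin n => μ) = (volume : Measure (Fin n → ℝ)) := rfl
  rw [this]
  exact integral_fintype_prod_eq_prod f

/-- Exponential inequality for quadratic functions of independent standard
Gaussians (Proposition: exponential chi2, first bound).  Here `lamMax` is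
characterized as `max (lam 1, …, lam n, 0)`. -/
theorem stmt_3 (n : ℕ) (lam δ : Fin n → ℝ) (γ : ℝ) (hγpos : 0 < γ)
    (hγ : γ ^ 2 = ∑ i, lam i ^ 2 * (2 + 4 * δ i ^ 2))
    (lamMax : ℝ) (hub : ∀ i, lam i ≤ lamMax) (h0 : 0 ≤ lamMax)
    (hattain : lamMax = 0 ∨ ∃ i, lamMax = lam i)
    (η : ℝ) (hη : 0 ≤ η) :
    (Measure.pi (fun _ : Fin n => gaussianReal 0 1))
      {x | η * γ ≤ ∑ i, lam i * ((x i + δ i) ^ 2 - (1 + δ i ^ 2))}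
      ≤ ENNReal.ofReal (Real.exp (-(η ^ 2 / (2 + 4 * η * lamMax / γ)))) := by
  set μpi := Measure.pi (fun _ : Fin n => gaussianReal 0 1) with hμpi
  haveI : IsProbabilityMeasure μpi := by
    rw [hμpi]; infer_instance
  set D : ℝ := γ + 2 * η * lamMax with hD
  have hDpos : 0 < D := by
    have : 0 ≤ 2 * η * lamMax := by positivity
    rw [hD]; linarith
  set t : ℝ := η / D with htdef
  have ht0 : 0 ≤ t := div_nonneg hη hDpos.le
  set c : ℝ := 2 * t * lamMax with hcdef
  have hc0 : 0 ≤ c := by rw [hcdef]; positivity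
  have hceq : c = 2 * η * lamMax / D := by rw [hcdef, htdef]; ring
  have hc1 : c < 1 := by
    rw [hceq, div_lt_one hDpos, hD]; linarith
  have hsc : ∀ i, 2 * (t * lam i) ≤ c := by
    intro i
    rw [hcdef]
    have := mul_le_mul_of_nonneg_left (hub i) ht0
    linarith
  have hshalf : ∀ i, t * lam i < 1 / 2 := fun i => by
    have h1 := hsc i; linarith
  -- the function and its product form
  set X : (Fin n → ℝ) → ℝ := fun x => ∑ i, lam i * ((x i + δ i) ^ 2 - (1 + δ i ^ 2)) with hX
  set f : Fin n → ℝ → ℝ :=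
    fun i y => rexp (-(t * lam i * (1 + δ i ^ 2))) * rexp (t * lam i * (y + δ i) ^ 2) with hf
  have hexpX : ∀ x, rexp (t * X x) = ∏ i, f i (x i) := by
    intro x
    rw [hX]
    simp only
    rw [mul_sum, Real.exp_sum]
    refine Finset.prod_congr rfl fun i _ => ?_
    rw [hf]
    simp only
    rw [← Real.exp_add]
    congr 1
    ring
  have hfint : ∀ i, Integrable (f i) (gaussianReal 0 1) := fun i =>
    ((integrable_gauss_exp_sq (hshalf i) (δ i)).const_mul _)
  have hXint : Integrable (fun x => rexp (t * X x)) μpi := by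
    rw [hμpi]
    simp_rw [hexpX]
    exact my_integrable_pi _ f hfint
  have hch := measure_ge_le_exp_mul_mgf (μ := μpi) (X := X) (η * γ) ht0 hXint
  -- compute / bound the mgf
  have hmgf : mgf X μpi t ≤ rexp (t ^ 2 * γ ^ 2 / (2 * (1 - c))) := by
    have h1 : mgf X μpi t = ∏ i, ∫ y, f i y ∂(gaussianReal 0 1) := by
      rw [mgf]
      rw [hμpi]
      simp_rw [hexpX]
      exact my_integral_pi _ f
    have h2 : ∀ i, ∫ y, f i y ∂(gaussianReal 0 1)
        = rexp (-(t * lam i * (1 + δ i ^ 2)))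
          * (Real.sqrt (1 - 2 * (t * lam i))⁻¹
            * rexp (t * lam i * δ i ^ 2 / (1 - 2 * (t * lam i)))) := by
      intro i
      rw [hf]
      simp only
      rw [integral_const_mul]
      congr 1
      have := integral_gauss_exp_sq (hshalf i) (δ i)
      rw [mul_assoc] at this ⊢
      exact this
    rw [h1]
    have h3 : ∏ i, ∫ y, f i y ∂(gaussianReal 0 1)
        ≤ ∏ i, rexp ((t * lam i) ^ 2 * (2 + 4 * δ i ^ 2) / (2 * (1 - c))) := by
      apply Finset.prod_le_prod
      · intro i _
        rw [h2 i]
        have hA : (0:ℝ) < 1 - 2 * (t * lam i) := by have := hshalf i; linarith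
        positivity
      · intro i _
        rw [h2 i]
        have := factor_bound (s := t * lam i) (δ := δ i) (c := c) hc0 hc1 (hsc i)
        convert this using 4 <;> ring
    refine h3.trans_eq ?_
    rw [← Real.exp_sum]
    congr 1
    simp_rw [mul_pow]
    rw [← Finset.sum_div]
    have hsum : ∑ i, t ^ 2 * lam i ^ 2 * (2 + 4 * δ i ^ 2) = t ^ 2 * γ ^ 2 := by
      rw [hγ, Finset.mul_sum]
      exact Finset.sum_congr rfl fun i _ => by ring
    rw [hsum]
  -- final algebra
  have hfinal : rexp (-t * (η * γ)) * rexp (t ^ 2 * γ ^ 2 / (2 * (1 - c)))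
      = rexp (-(η ^ 2 / (2 + 4 * η * lamMax / γ))) := by
    rw [← Real.exp_add]
    congr 1
    have h1c : 1 - c = γ / D := by
      rw [hceq]
      field_simp
      rw [hD]; ring
    rw [h1c, htdef]
    have hγne : γ ≠ 0 := ne_of_gt hγpos
    have hDne : D ≠ 0 := ne_of_gt hDpos
    have hEpos : 0 < 2 + 4 * η * lamMax / γ := by
      have : 0 ≤ 4 * η * lamMax / γ := by positivity
      linarith
    have hEne : 2 + 4 * η * lamMax / γ ≠ 0 := ne_of_gt hEpos
    field_simp
    rw [hD]
    ring
  -- conclude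
  have hreal : (μpi {x | η * γ ≤ X x}).toReal ≤ rexp (-(η ^ 2 / (2 + 4 * η * lamMax / γ))) := by
    calc (μpi {x | η * γ ≤ X x}).toReal ≤ rexp (-t * (η * γ)) * mgf X μpi t := hch
    _ ≤ rexp (-t * (η * γ)) * rexp (t ^ 2 * γ ^ 2 / (2 * (1 - c))) := by
        apply mul_le_mul_of_nonneg_left hmgf (Real.exp_nonneg _)
    _ = rexp (-(η ^ 2 / (2 + 4 * η * lamMax / γ))) := hfinal
  have hne : μpi {x | η * γ ≤ X x} ≠ ⊤ := measure_ne_top _ _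
  calc μpi {x | η * γ ≤ X x} = ENNReal.ofReal (μpi {x | η * γ ≤ X x}).toReal :=
        (ENNReal.ofReal_toReal hne).symm
    _ ≤ ENNReal.ofReal (rexp (-(η ^ 2 / (2 + 4 * η * lamMax / γ)))) :=
        ENNReal.ofReal_le_ofReal hreal
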